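/- If a complete lattice L is continuous and sup-generated by its coprime elements, then L is (constructively) completely distributive: every element a is the supremum of all elements totally below a. -/

import Mathlib

def IsCoprimeElt {L : Type*} [CompleteLattice L] (p : L) : Prop :=
  p ≠ ⊥ ∧ ∀ u v : L, p ≤ u ⊔ v → p ≤ u ∨ p ≤ v

/-- `x` is way below `a`. -/
def WayBelow {L : Type*} [CompleteLattice L] (x a : L) : Prop :=
  ∀ D : Set L, DirectedOn (· ≤ ·) D → a ≤ sSup D → ∃ d ∈ D, x ≤ d

/-- `x` is totally below `a`. -/
def TotallyBelow {L : Type*} [CompleteLattice L] (x a : L) : Prop :=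
  ∀ B : Set L, a ≤ sSup B → ∃ b ∈ B, x ≤ b

open Classical in
lemma coprime_le_finset_sup {L : Type*} [CompleteLattice L] {p : L}
    (hp : IsCoprimeElt p) : ∀ F : Finset L, p ≤ F.sup id → ∃ b ∈ F, p ≤ b := by
  intro F
  induction F using Finset.induction_on with
  | empty =>
    intro h
    simp only [Finset.sup_empty, le_bot_iff] at h
    exact absurd h hp.1
  | insert _ _ hx ih =>
    rename_i a s
    intro h
    rw [Finset.sup_insert] at h
    rcases hp.2 _ _ h with h1 | h1
    · exact ⟨a, Finset.mem_insert_self a s, h1⟩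
    · obtain ⟨b, hb, hpb⟩ := ih h1
      exact ⟨b, Finset.mem_insert_of_mem hb, hpb⟩

open Classical in
lemma coprime_wayBelow_totallyBelow {L : Type*} [CompleteLattice L] {p a : L}
    (hp : IsCoprimeElt p) (hw : WayBelow p a) : TotallyBelow p a := by
  intro B hB
  set D : Set L := {x | ∃ F : Finset L, ↑F ⊆ B ∧ x = F.sup id} with hD
  have hdir : DirectedOn (· ≤ ·) D := by
    rintro x ⟨F, hF, rfl⟩ y ⟨G, hG, rfl⟩
    exact ⟨(F ∪ G).sup id, ⟨F ∪ G, by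
      simp only [Finset.coe_union]; exact Set.union_subset hF hG, rfl⟩,
      Finset.sup_mono (Finset.subset_union_left), Finset.sup_mono (Finset.subset_union_right)⟩
  have hle : a ≤ sSup D := by
    refine hB.trans (sSup_le_sSup ?_)
    intro b hb
    exact ⟨{b}, by simpa using hb, by simp⟩
  obtain ⟨d, ⟨F, hF, rfl⟩, hpd⟩ := hw D hdir hle
  obtain ⟨b, hb, hpb⟩ := coprime_le_finset_sup hp F hpd
  exact ⟨b, hF hb, hpb⟩

/-- A continuous complete lattice sup-generated by its coprime elements is
constructively completely distributive. -/
theorem ccd_of_continuous_coprime_supGenerated {L : Type*} [CompleteLattice L]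
    (hcont : ∀ a : L, DirectedOn (· ≤ ·) {x | WayBelow x a} ∧
      a = sSup {x | WayBelow x a})
    (hgen : ∀ a : L, a = sSup {p | IsCoprimeElt p ∧ p ≤ a}) :
    ∀ a : L, a = sSup {x | TotallyBelow x a} := by
  intro a
  apply le_antisymm
  · conv_lhs => rw [(hcont a).2]
    apply sSup_le
    intro x hx
    conv_lhs => rw [hgen x]
    apply sSup_le
    rintro p ⟨hp, hpx⟩
    refine le_sSup ?_
    have hw : WayBelow p a := fun D hD haD => by
      obtain ⟨d, hd, hxd⟩ := hx D hD haD
      exact ⟨d, hd, hpx.trans hxd⟩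
    exact coprime_wayBelow_totallyBelow hp hw
  · apply sSup_le
    intro x hx
    obtain ⟨b, hb, hxb⟩ := hx {a} (by simp)
    simp only [Set.mem_singleton_iff] at hb
    exact hb ▸ hxb
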